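/- arXiv:2407.20366 — 2 statements merged into one kernel-verified Lean document; each statement's English description precedes it below -/
import Mathlib

section
/- Let T > 0, let η : ℝ → ℝ be bounded with |η|_∞ its supremum norm, and let μ ≥ 1. Define α(t,x) = (e^{μη(x)} − e^{2μ|η|_∞})/(t(T−t)) and φ(t,x) = e^{μη(x)}/(t(T−t)) on (0,T) × ℝ. Then there exists C > 0 depending only on T such that |∂_t α(t,x)| ≤ C e^{2μ|η|_∞} φ(t,x)² and |∂_{tt} α(t,x)| ≤ C e^{2μ|η|_∞} φ(t,x)³ for all (t,x) ∈ (0,T) × ℝ. -/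
open Set Real

lemma hasDerivAt_aux (T K : ℝ) {t : ℝ} (ht : t ∈ Set.Ioo (0:ℝ) T) :
    HasDerivAt (fun s => K / (s * (T - s))) (-(K * (T - 2*t)) / (t * (T - t))^2) t := by
  have hne : t * (T - t) ≠ 0 := ne_of_gt (mul_pos ht.1 (sub_pos.2 ht.2))
  have hg : HasDerivAt (fun s => s * (T - s)) (1 * (T - t) + t * (0 - 1)) t :=
    (hasDerivAt_id t).mul ((hasDerivAt_const t T).sub (hasDerivAt_id t))
  have h := (hasDerivAt_const t K).div hg hne
  have h2 : -(K * (T - 2*t)) / (t * (T - t))^2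
      = (0 * (t * (T - t)) - K * (1 * (T - t) + t * (0 - 1))) / (t * (T - t))^2 := by
    ring
  rw [h2]; exact h

lemma deriv_aux (T K : ℝ) {t : ℝ} (ht : t ∈ Set.Ioo (0:ℝ) T) :
    deriv (fun s => K / (s * (T - s))) t = -(K * (T - 2*t)) / (t * (T - t))^2 :=
  (hasDerivAt_aux T K ht).deriv

lemma deriv2_aux (T K : ℝ) {t : ℝ} (ht : t ∈ Set.Ioo (0:ℝ) T) :
    deriv (deriv (fun s => K / (s * (T - s)))) t
      = 2 * K * ((t*(T-t)) + (T - 2*t)^2) / (t * (T - t))^3 := by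
  have hev : deriv (fun s => K / (s * (T - s)))
      =ᶠ[nhds t] fun s => -(K * (T - 2*s)) / (s * (T - s))^2 := by
    filter_upwards [isOpen_Ioo.mem_nhds ht] with s hs
    exact deriv_aux T K hs
  rw [hev.deriv_eq]
  have hne : t * (T - t) ≠ 0 := ne_of_gt (mul_pos ht.1 (sub_pos.2 ht.2))
  have hg : HasDerivAt (fun s => s * (T - s)) (1 * (T - t) + t * (0 - 1)) t :=
    (hasDerivAt_id t).mul ((hasDerivAt_const t T).sub (hasDerivAt_id t))
  have hc : HasDerivAt (fun s => -(K * (T - 2*s))) (-(K * (0 - 2*1))) t :=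
    (((hasDerivAt_const t T).sub ((hasDerivAt_id t).const_mul 2)).const_mul K).neg
  have hd : HasDerivAt (fun s => (s * (T - s))^2)
      ((2:ℕ) * (t*(T-t))^(2-1) * (1 * (T - t) + t * (0 - 1))) t := hg.pow 2
  have hdne : (t * (T - t))^2 ≠ 0 := pow_ne_zero 2 hne
  have h : deriv (fun s => -(K * (T - 2*s)) / (s * (T - s))^2) t = _ := (hc.div hd hdne).deriv
  rw [h]
  rw [div_eq_div_iff (pow_ne_zero 2 hdne) (pow_ne_zero 3 hne)]
  push_cast [show (2:ℕ) - 1 = 1 from rfl]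
  ring

set_option maxHeartbeats 2000000 in
theorem stmt1 (T : ℝ) (hT : 0 < T) (η : ℝ → ℝ) (m : ℝ) (hηm : ∀ x, |η x| ≤ m)
    (μ : ℝ) (hμ : 1 ≤ μ) :
    ∃ C > 0, ∀ x : ℝ, ∀ t ∈ Set.Ioo (0:ℝ) T,
      |deriv (fun s => (Real.exp (μ * η x) - Real.exp (2 * μ * m)) / (s * (T - s))) t|
        ≤ C * Real.exp (2 * μ * m) * (Real.exp (μ * η x) / (t * (T - t))) ^ 2 ∧
      |deriv (deriv (fun s => (Real.exp (μ * η x) - Real.exp (2 * μ * m)) / (s * (T - s)))) t|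
        ≤ C * Real.exp (2 * μ * m) * (Real.exp (μ * η x) / (t * (T - t))) ^ 3 := by
  have hm : 0 ≤ m := le_trans (abs_nonneg _) (hηm 0)
  have hμ0 : 0 ≤ μ := le_trans zero_le_one hμ
  set F := Real.exp (μ * m) with hFdef
  have hF0 : 0 < F := Real.exp_pos _
  have hF1 : 1 ≤ F := Real.one_le_exp (by positivity)
  have hE : Real.exp (2 * μ * m) = F^2 := by
    rw [show 2*μ*m = μ*m + μ*m by ring, Real.exp_add, sq]
  refine ⟨(T + 4*T^2) * F^3 + 1, by positivity, ?_⟩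
  intro x t ht
  set K := Real.exp (μ * η x) - Real.exp (2 * μ * m) with hKdef
  set A := Real.exp (μ * η x) with hAdef
  have hA0 : 0 < A := Real.exp_pos _
  have hAF : A ≤ F := Real.exp_le_exp.2 (by
    have := (abs_le.1 (hηm x)).2
    nlinarith)
  have hFA : 1 ≤ F * A := by
    have h1 : Real.exp (-(μ*m)) ≤ A := Real.exp_le_exp.2 (by
      have := (abs_le.1 (hηm x)).1
      nlinarith)
    have h2 : F * Real.exp (-(μ*m)) = 1 := by
      rw [← Real.exp_add]; simp
    nlinarith [Real.exp_pos (-(μ*m))]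
  have hg0 : 0 < t * (T - t) := mul_pos ht.1 (sub_pos.2 ht.2)
  set g := t * (T - t) with hgdef
  have hgT : g ≤ T^2 := by nlinarith [ht.1.le, sub_nonneg.2 ht.2.le, sq_nonneg (T - 2*t)]
  have hKb : |K| ≤ F^2 := by
    rw [abs_le, hKdef, hE]
    constructor <;> nlinarith [Real.exp_pos (μ * η x), Real.exp_pos (2*μ*m), hAF, hF1]
  have hTt : |T - 2*t| ≤ T := by
    rw [abs_le]; constructor <;> nlinarith [ht.1, ht.2]
  have hC : (0:ℝ) < (T + 4*T^2) * F^3 + 1 := by positivity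
  constructor
  · rw [deriv_aux T K ht]
    have hgoal : |(-(K * (T - 2*t))) / g^2| = |K| * |T - 2*t| / g^2 := by
      rw [abs_div, abs_neg, abs_mul, abs_of_pos (by positivity : (0:ℝ) < g^2)]
    rw [hgoal, hE]
    have hrhs : ((T + 4*T^2) * F^3 + 1) * F^2 * (A / g)^2
        = (((T + 4*T^2) * F^3 + 1) * F^2 * A^2) / g^2 := by
      rw [div_pow]; ring
    rw [hrhs]
    rw [div_le_div_iff_of_pos_right (by positivity)]
    -- |K| * |T-2t| ≤ C * F^2 * A^2
    have h1 : |K| * |T - 2*t| ≤ F^2 * T := by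
      have := abs_nonneg K
      have := abs_nonneg (T - 2*t)
      nlinarith
    have hF23 : F^2 ≤ F^3 := by nlinarith [hF1, hF0]
    have hexp : (T + 4*T^2) * F^3 + 1 = T*F^3 + 4*T^2*F^3 + 1 := by ring
    have hFA2 : 1 ≤ (F*A) * (F*A) := by nlinarith [hFA, hF0, hA0]
    have h2 : 1 ≤ F^2 * A^2 := by nlinarith [hFA2]
    have hCF : F^2 * T ≤ (T + 4*T^2) * F^3 + 1 := by
      have h3 : T * F^2 ≤ T * F^3 := mul_le_mul_of_nonneg_left hF23 hT.le
      have h4 : 0 < 4*T^2*F^3 := by positivity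
      rw [hexp]; linarith
    calc |K| * |T - 2*t| ≤ F^2 * T := h1
      _ = (F^2 * T) * 1 := (mul_one _).symm
      _ ≤ ((T + 4*T^2) * F^3 + 1) * (F^2 * A^2) :=
          mul_le_mul hCF h2 zero_le_one hC.le
      _ = ((T + 4*T^2) * F^3 + 1) * F^2 * A^2 := by ring
  · rw [deriv2_aux T K ht]
    have hgoal : |2 * K * (g + (T - 2*t)^2) / g^3|
        = 2 * |K| * (g + (T - 2*t)^2) / g^3 := by
      rw [abs_div, abs_of_pos (by positivity : (0:ℝ) < g^3), abs_mul, abs_mul]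
      rw [abs_of_pos (by positivity : (0:ℝ) < g + (T - 2*t)^2), abs_of_pos (by norm_num : (0:ℝ) < 2)]
    rw [hgoal, hE]
    have hrhs : ((T + 4*T^2) * F^3 + 1) * F^2 * (A / g)^3
        = (((T + 4*T^2) * F^3 + 1) * F^2 * A^3) / g^3 := by
      rw [div_pow]; ring
    rw [hrhs]
    rw [div_le_div_iff_of_pos_right (by positivity)]
    have h1 : 2 * |K| * (g + (T - 2*t)^2) ≤ 4 * T^2 * F^2 := by
      have hK0 := abs_nonneg K
      have h2t : (T - 2*t)^2 ≤ T^2 := by nlinarith [hTt, abs_nonneg (T - 2*t), sq_abs (T - 2*t)]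
      nlinarith
    have hF23 : F^2 ≤ F^3 := by nlinarith [hF1, hF0]
    have hexp : (T + 4*T^2) * F^3 + 1 = T*F^3 + 4*T^2*F^3 + 1 := by ring
    have hFA2 : 1 ≤ (F*A) * (F*A) := by nlinarith [hFA, hF0, hA0]
    have h2 : 1 ≤ F^3 * A^3 := by nlinarith [hFA2, hFA, mul_pos hF0 hA0]
    have hCF : 4 * T^2 * F^3 ≤ (T + 4*T^2) * F^3 + 1 := by
      have h4 : 0 < T * F^3 := by positivity
      rw [hexp]; linarith
    calc 2 * |K| * (g + (T - 2*t)^2) ≤ 4 * T^2 * F^2 := h1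
      _ = (4 * T^2 * F^2) * 1 := (mul_one _).symm
      _ ≤ (4 * T^2 * F^2) * (F^3 * A^3) :=
          mul_le_mul_of_nonneg_left h2 (by positivity)
      _ = (4 * T^2 * F^3) * (F^2 * A^3) := by ring
      _ ≤ ((T + 4*T^2) * F^3 + 1) * (F^2 * A^3) :=
          mul_le_mul_of_nonneg_right hCF (by positivity)
      _ = ((T + 4*T^2) * F^3 + 1) * F^2 * A^3 := by ring
end

section
/- Let K be a Hilbert space, ε > 0, and define F : K → ℝ by F(x) = ½‖x‖² + ε‖x − c‖ + ⟨b, x⟩ for fixed b, c ∈ K. If x* minimizes F and x* ≠ c, then for all x ∈ K: ⟨x*, x⟩ + ε⟨x* − c, x⟩/‖x* − c‖ + ⟨b, x⟩ = 0. -/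
open RealInnerProductSpace

lemma hasFDerivAt_norm_aux {K : Type*} [NormedAddCommGroup K] [InnerProductSpace ℝ K]
    {y : K} (hy : y ≠ 0) :
    HasFDerivAt (fun z : K => ‖z‖) (‖y‖⁻¹ • (innerSL ℝ y)) y := by
  have hsq : HasFDerivAt (fun z : K => ‖z‖ ^ 2) (2 • (innerSL ℝ y)) y :=
    (hasStrictFDerivAt_norm_sq y).hasFDerivAt
  have hpos : (0:ℝ) < ‖y‖ := norm_pos_iff.2 hy
  have hne : ‖y‖ ^ 2 ≠ 0 := by positivity
  have hsqrt := (Real.hasDerivAt_sqrt hne).comp_hasFDerivAt y hsq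
  have heq : (fun z : K => Real.sqrt (‖z‖ ^ 2)) = fun z : K => ‖z‖ := by
    ext z; rw [Real.sqrt_sq (norm_nonneg z)]
  rw [show ((fun x => Real.sqrt x) ∘ fun z : K => ‖z‖ ^ 2) = fun z : K => ‖z‖ from heq] at hsqrt
  refine hsqrt.congr_fderiv ?_
  rw [Real.sqrt_sq hpos.le]
  ext v
  simp [smul_smul]
  field_simp

theorem stmt19 {K : Type*} [NormedAddCommGroup K] [InnerProductSpace ℝ K]
    (ε : ℝ) (hε : 0 < ε) (b c xstar : K)
    (hmin : ∀ x : K,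
      (1 / 2) * ‖xstar‖ ^ 2 + ε * ‖xstar - c‖ + ⟪b, xstar⟫
        ≤ (1 / 2) * ‖x‖ ^ 2 + ε * ‖x - c‖ + ⟪b, x⟫)
    (hne : xstar ≠ c) :
    ∀ x : K, ⟪xstar, x⟫ + ε * ⟪xstar - c, x⟫ / ‖xstar - c‖ + ⟪b, x⟫ = 0 := by
  set F : K → ℝ := fun x => (1 / 2) * ‖x‖ ^ 2 + ε * ‖x - c‖ + ⟪b, x⟫ with hF
  have hyne : xstar - c ≠ 0 := sub_ne_zero.2 hne
  have hnpos : (0:ℝ) < ‖xstar - c‖ := norm_pos_iff.2 hyne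
  -- derivative pieces
  have h1 : HasFDerivAt (fun x : K => (1 / 2 : ℝ) * ‖x‖ ^ 2)
      ((1/2 : ℝ) • (2 • (innerSL ℝ xstar))) xstar :=
    (hasStrictFDerivAt_norm_sq xstar).hasFDerivAt.const_smul (1/2 : ℝ)
  have hsub : HasFDerivAt (fun x : K => x - c) (ContinuousLinearMap.id ℝ K) xstar := by
    simpa using (hasFDerivAt_id xstar).sub_const c
  have h2 : HasFDerivAt (fun x : K => ε * ‖x - c‖)
      (ε • ((‖xstar - c‖⁻¹ • (innerSL ℝ (xstar - c))).comp (ContinuousLinearMap.id ℝ K)))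
      xstar :=
    (((hasFDerivAt_norm_aux hyne).comp xstar hsub)).const_smul ε
  have h3 : HasFDerivAt (fun x : K => ⟪b, x⟫) (innerSL ℝ b) xstar :=
    (innerSL ℝ b).hasFDerivAt
  have hFd : HasFDerivAt F
      (((1/2 : ℝ) • (2 • (innerSL ℝ xstar)))
        + (ε • ((‖xstar - c‖⁻¹ • (innerSL ℝ (xstar - c))).comp (ContinuousLinearMap.id ℝ K)))
        + innerSL ℝ b) xstar := (h1.add h2).add h3
  have hloc : IsLocalMin F xstar := by
    apply IsMinOn.isLocalMin _ (Filter.univ_mem)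
    intro x _
    exact hmin x
  have hzero := hloc.hasFDerivAt_eq_zero hFd
  intro x
  have := congrArg (fun L : K →L[ℝ] ℝ => L x) hzero
  simp only [ContinuousLinearMap.add_apply, ContinuousLinearMap.smul_apply,
    ContinuousLinearMap.coe_comp', Function.comp_apply, ContinuousLinearMap.coe_id', id_eq,
    innerSL_apply_apply, ContinuousLinearMap.zero_apply, smul_eq_mul, nsmul_eq_mul, Nat.cast_ofNat] at this
  field_simp at this ⊢
  linarith [this]
end
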